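/- Let G be a group with finite symmetric generating set X. If (G,X) has the falsification by fellow traveler property with constant k ≥ 1, then (G,X) is almost convex(2) with constant at most 3k: for every n ∈ ℕ and all g, g' ∈ G with d(1,g) = d(1,g') = n and d(g,g') ≤ 2, there is an edge path from g to g' of length at most 3k all of whose vertices lie in the ball B(n) = {h ∈ G : d(1,h) ≤ n}. -/

import Mathlib

section WordMetricPrelude

variable {G : Type*} [Group G]

/-- `w` is a word over the generating set `X`. -/
def IsWord (X : Finset G) (w : List G) : Prop := ∀ x ∈ w, x ∈ X

/-- The path traced out by the word `w`, at time `t`: the product of the first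
`min t w.length` letters of `w`. -/
def wordPath (w : List G) (t : ℕ) : G := (w.take t).prod

/-- The word metric on `G` with respect to `X`: the minimal length of a word
over `X` representing `g⁻¹ * h`. -/
noncomputable def wordDist (X : Finset G) (g h : G) : ℕ :=
  sInf {n : ℕ | ∃ w : List G, IsWord X w ∧ w.length = n ∧ w.prod = g⁻¹ * h}

/-- A word `w` over `X` is geodesic if its length equals the distance from `1`
to the element it represents. -/
def IsGeodesic (X : Finset G) (w : List G) : Prop :=
  IsWord X w ∧ w.length = wordDist X 1 w.prod

/-- Words `w` and `u` synchronously `k`-fellow travel. -/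
def SyncFellowTravel (X : Finset G) (k : ℕ) (w u : List G) : Prop :=
  ∀ t : ℕ, wordDist X (wordPath w t) (wordPath u t) ≤ k

/-- Words `w` and `u` asynchronously `k`-fellow travel: there is a nondecreasing
unbounded reparameterization `φ` with `d(w(t), u(φ t)) ≤ k` for all `t`. -/
def AsyncFellowTravel (X : Finset G) (k : ℕ) (w u : List G) : Prop :=
  ∃ φ : ℕ → ℕ, Monotone φ ∧ (∀ N : ℕ, ∃ t : ℕ, N ≤ φ t) ∧
    ∀ t : ℕ, wordDist X (wordPath w t) (wordPath u (φ t)) ≤ k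

/-- `(G, X)` has the synchronous falsification by fellow traveler property with
constant `k`. -/
def SyncFFTP (X : Finset G) (k : ℕ) : Prop :=
  ∀ w : List G, IsWord X w → ¬ IsGeodesic X w →
    ∃ u : List G, IsWord X u ∧ u.prod = w.prod ∧ u.length < w.length ∧
      SyncFellowTravel X k u w

/-- `(G, X)` has the asynchronous falsification by fellow traveler property with
constant `k`. -/
def AsyncFFTP (X : Finset G) (k : ℕ) : Prop :=
  ∀ w : List G, IsWord X w → ¬ IsGeodesic X w →
    ∃ u : List G, IsWord X u ∧ u.prod = w.prod ∧ u.length < w.length ∧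
      AsyncFellowTravel X k u w

end WordMetricPrelude

namespace FFTPAux

variable {G : Type*} [Group G] {X : Finset G}

/-- Every element is represented by a word, given symmetric generation. -/
lemma exists_word (hXsym : ∀ x ∈ X, x⁻¹ ∈ X)
    (hXgen : Subgroup.closure (X : Set G) = ⊤) (g : G) :
    ∃ w : List G, IsWord X w ∧ w.prod = g := by
  have hg : g ∈ Subgroup.closure (X : Set G) := by rw [hXgen]; trivial
  induction hg using Subgroup.closure_induction with
  | mem x hx =>
      refine ⟨[x], ?_, by simp⟩
      intro y hy
      simp only [List.mem_singleton] at hy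
      subst hy; exact hx
  | one => exact ⟨[], by intro y hy; simp at hy, by simp⟩
  | mul x y hx hy ihx ihy =>
      obtain ⟨w1, hw1, hp1⟩ := ihx
      obtain ⟨w2, hw2, hp2⟩ := ihy
      refine ⟨w1 ++ w2, ?_, by simp [hp1, hp2]⟩
      intro z hz; rcases List.mem_append.1 hz with h | h
      exacts [hw1 z h, hw2 z h]
  | inv x hx ih =>
      obtain ⟨w, hw, hp⟩ := ih
      refine ⟨(w.map fun a => a⁻¹).reverse, ?_, ?_⟩
      · intro z hz
        simp only [List.mem_reverse, List.mem_map] at hz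
        obtain ⟨a, ha, rfl⟩ := hz
        exact hXsym a (hw a ha)
      · rw [← List.prod_inv_reverse, hp]

lemma distSet_nonempty (hXsym : ∀ x ∈ X, x⁻¹ ∈ X)
    (hXgen : Subgroup.closure (X : Set G) = ⊤) (g h : G) :
    {n : ℕ | ∃ w : List G, IsWord X w ∧ w.length = n ∧ w.prod = g⁻¹ * h}.Nonempty := by
  obtain ⟨w, hw, hp⟩ := exists_word hXsym hXgen (g⁻¹ * h)
  exact ⟨w.length, w, hw, rfl, hp⟩

lemma dist_le {g h : G} {w : List G} (hw : IsWord X w) (hp : w.prod = g⁻¹ * h) :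
    wordDist X g h ≤ w.length :=
  Nat.sInf_le ⟨w, hw, rfl, hp⟩

lemma exists_min_word (hXsym : ∀ x ∈ X, x⁻¹ ∈ X)
    (hXgen : Subgroup.closure (X : Set G) = ⊤) (g h : G) :
    ∃ w : List G, IsWord X w ∧ w.length = wordDist X g h ∧ w.prod = g⁻¹ * h :=
  Nat.sInf_mem (distSet_nonempty hXsym hXgen g h)

lemma dist_self (g : G) : wordDist X g g = 0 :=
  Nat.le_zero.1 (by simpa using dist_le (w := []) (g := g) (h := g) (by intro y hy; simp at hy) (by simp))

lemma eq_of_dist_eq_zero (hXsym : ∀ x ∈ X, x⁻¹ ∈ X)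
    (hXgen : Subgroup.closure (X : Set G) = ⊤) {g h : G}
    (h0 : wordDist X g h = 0) : g = h := by
  obtain ⟨w, hw, hl, hp⟩ := exists_min_word hXsym hXgen g h
  rw [h0, List.length_eq_zero_iff] at hl
  subst hl
  have : g⁻¹ * h = 1 := hp.symm
  have := mul_eq_one_iff_inv_eq.mp this
  simpa using this

lemma dist_symm (hXsym : ∀ x ∈ X, x⁻¹ ∈ X)
    (hXgen : Subgroup.closure (X : Set G) = ⊤) (g h : G) :
    wordDist X g h = wordDist X h g := by
  have key : ∀ a b : G, wordDist X a b ≤ wordDist X b a := by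
    intro a b
    obtain ⟨w, hw, hl, hp⟩ := exists_min_word hXsym hXgen b a
    have hw' : IsWord X ((w.map fun x => x⁻¹).reverse) := by
      intro z hz
      simp only [List.mem_reverse, List.mem_map] at hz
      obtain ⟨x, hx, rfl⟩ := hz
      exact hXsym x (hw x hx)
    have hp' : ((w.map fun x => x⁻¹).reverse).prod = a⁻¹ * b := by
      rw [← List.prod_inv_reverse, hp]; group
    calc wordDist X a b ≤ _ := dist_le hw' hp'
      _ = wordDist X b a := by simpa using hl
  exact le_antisymm (key g h) (key h g)

lemma dist_triangle (hXsym : ∀ x ∈ X, x⁻¹ ∈ X)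
    (hXgen : Subgroup.closure (X : Set G) = ⊤) (g h j : G) :
    wordDist X g j ≤ wordDist X g h + wordDist X h j := by
  obtain ⟨w1, hw1, hl1, hp1⟩ := exists_min_word hXsym hXgen g h
  obtain ⟨w2, hw2, hl2, hp2⟩ := exists_min_word hXsym hXgen h j
  have : wordDist X g j ≤ (w1 ++ w2).length := by
    refine dist_le ?_ ?_
    · intro z hz; rcases List.mem_append.1 hz with hh | hh
      exacts [hw1 z hh, hw2 z hh]
    · rw [List.prod_append, hp1, hp2]; group
  simpa [hl1, hl2] using this

lemma dist_mul_left (a g h : G) : wordDist X (a * g) (a * h) = wordDist X g h := by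
  unfold wordDist
  congr 1
  ext n
  constructor <;> (rintro ⟨w, hw, hl, hp⟩; exact ⟨w, hw, hl, by rw [hp]; group⟩)

lemma dist_one_path {w : List G} (hw : IsWord X w) (t : ℕ) :
    wordDist X 1 (wordPath w t) ≤ min t w.length := by
  have := dist_le (g := (1 : G)) (h := wordPath w t)
    (w := w.take t) (fun z hz => hw z (List.mem_of_mem_take hz)) (by simp [wordPath])
  simpa using this

lemma path_step {w : List G} (hw : IsWord X w) (t : ℕ) :
    wordDist X (wordPath w t) (wordPath w (t + 1)) ≤ 1 := by
  rcases lt_or_ge t w.length with hlt | hge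
  · have htake : w.take (t + 1) = w.take t ++ [w.get ⟨t, hlt⟩] := by
      rw [← List.take_concat_get hlt]
      simp
    have : wordDist X (wordPath w t) (wordPath w (t + 1)) ≤ ([w.get ⟨t, hlt⟩] : List G).length := by
      refine dist_le ?_ ?_
      · intro z hz; simp at hz; subst hz; exact hw _ (w.get_mem _)
      · simp only [wordPath, htake, List.prod_append, List.prod_cons, List.prod_nil,
          List.length_singleton, mul_one]
        group
    simpa using this
  · have : wordPath w (t + 1) = wordPath w t := by
      unfold wordPath
      rw [List.take_of_length_le hge, List.take_of_length_le (le_trans hge (Nat.le_succ t))]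
    rw [this, dist_self]
    exact Nat.zero_le 1

lemma path_prod {w : List G} {t : ℕ} (ht : w.length ≤ t) : wordPath w t = w.prod := by
  unfold wordPath; rw [List.take_of_length_le ht]

lemma path_zero (w : List G) : wordPath w 0 = 1 := by simp [wordPath]

end FFTPAux

namespace FFTPAux

variable {G : Type*} [Group G] {X : Finset G}

/-- Existence of an edge path of length at most `A` from `a` to `b` inside the ball
of radius `n`. -/
def EP (X : Finset G) (n : ℕ) (a b : G) (A : ℕ) : Prop :=
  ∃ m ≤ A, ∃ p : ℕ → G, p 0 = a ∧ p m = b ∧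
    (∀ i < m, wordDist X (p i) (p (i + 1)) ≤ 1) ∧
    (∀ i ≤ m, wordDist X 1 (p i) ≤ n)

lemma EP.mono {n a b A A'} (h : EP X n a b A) (hA : A ≤ A') : EP X n a b A' := by
  obtain ⟨m, hm, p, hp⟩ := h
  exact ⟨m, le_trans hm hA, p, hp⟩

lemma EP.trans {n : ℕ} {a b c : G} {A B : ℕ} (h1 : EP X n a b A) (h2 : EP X n b c B) :
    EP X n a c (A + B) := by
  obtain ⟨m1, hm1, p1, hp10, hp1m, hp1s, hp1b⟩ := h1
  obtain ⟨m2, hm2, p2, hp20, hp2m, hp2s, hp2b⟩ := h2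
  refine ⟨m1 + m2, Nat.add_le_add hm1 hm2, fun i => if i < m1 then p1 i else p2 (i - m1), ?_, ?_, ?_, ?_⟩
  · rcases Nat.eq_zero_or_pos m1 with h | h
    · simp only [h, Nat.not_lt_zero, if_false, Nat.sub_zero, hp20, ← hp1m, h, hp10]
    · simp [h, hp10]
  · have : ¬ (m1 + m2 < m1) := by omega
    simp only [this, if_false, Nat.add_sub_cancel_left, hp2m]
  · intro i hi
    rcases lt_trichotomy (i + 1) m1 with h | h | h
    · have hi1 : i < m1 := by omega
      simp only [hi1, h, if_true]
      exact hp1s i hi1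
    · have hi1 : i < m1 := by omega
      have h2' : ¬ (i + 1 < m1) := by omega
      simp only [hi1, h2', if_true, if_false]
      have h3 : i + 1 - m1 = 0 := by omega
      rw [h3, hp20, ← hp1m, ← h]
      exact hp1s i hi1
    · have hi1 : ¬ (i < m1) := by omega
      have hi2 : ¬ (i + 1 < m1) := by omega
      simp only [hi1, hi2, if_false]
      have : i + 1 - m1 = (i - m1) + 1 := by omega
      rw [this]
      exact hp2s (i - m1) (by omega)
  · intro i hi
    rcases lt_or_ge i m1 with h | h
    · simp only [h, if_true]; exact hp1b i (le_of_lt h)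
    · have : ¬ (i < m1) := by omega
      simp only [this, if_false]; exact hp2b (i - m1) (by omega)

lemma EP.refl {n : ℕ} {a : G} (ha : wordDist X 1 a ≤ n) : EP X n a a 0 :=
  ⟨0, le_refl 0, fun _ => a, rfl, rfl, fun i hi => by omega, fun _ _ => ha⟩

variable (hXsym : ∀ x ∈ X, x⁻¹ ∈ X) (hXgen : Subgroup.closure (X : Set G) = ⊤)
include hXsym hXgen

/-- Descent along a word: from `w(t₂)` down to `w(t₁)`. -/
lemma EP.descent {w : List G} (hw : IsWord X w) {t₁ t₂ n : ℕ} (h12 : t₁ ≤ t₂) (h2 : t₂ ≤ n) :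
    EP X n (wordPath w t₂) (wordPath w t₁) (t₂ - t₁) := by
  refine ⟨t₂ - t₁, le_refl _, fun i => wordPath w (t₂ - i), by simp, ?_, ?_, ?_⟩
  · show wordPath w (t₂ - (t₂ - t₁)) = wordPath w t₁
    rw [Nat.sub_sub_self h12]
  · intro i hi
    show wordDist X (wordPath w (t₂ - i)) (wordPath w (t₂ - (i + 1))) ≤ 1
    rw [dist_symm hXsym hXgen]
    have h1 : t₂ - i = (t₂ - (i + 1)) + 1 := by omega
    rw [h1]
    exact path_step hw _
  · intro i hi
    calc wordDist X 1 (wordPath w (t₂ - i)) ≤ min (t₂ - i) w.length := dist_one_path hw _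
      _ ≤ n := le_trans (min_le_left _ _) (by omega)

/-- Ascent along a word: from `w(t)` up to the end of the word. -/
lemma EP.ascent {w : List G} (hw : IsWord X w) {t n : ℕ} (hlen : w.length ≤ n) :
    EP X n (wordPath w t) w.prod (w.length - t) := by
  refine ⟨w.length - t, le_refl _, fun i => wordPath w (t + i), by simp, ?_, ?_, ?_⟩
  · show wordPath w (t + (w.length - t)) = w.prod
    exact path_prod (by omega)
  · intro i hi
    show wordDist X (wordPath w (t + i)) (wordPath w (t + (i + 1))) ≤ 1
    rw [← Nat.add_assoc]
    exact path_step hw _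
  · intro i hi
    calc wordDist X 1 (wordPath w (t + i)) ≤ min (t + i) w.length := dist_one_path hw _
      _ ≤ n := le_trans (min_le_right _ _) hlen

/-- Crossing: a geodesic between nearby points stays in the ball. -/
lemma EP.cross {a b : G} {c n : ℕ} (ha : wordDist X 1 a ≤ c) (hb : wordDist X 1 b ≤ c)
    (hcn : c + wordDist X a b / 2 ≤ n) :
    EP X n a b (wordDist X a b) := by
  obtain ⟨v, hv, hlv, hpv⟩ := exists_min_word hXsym hXgen a b
  set L := wordDist X a b with hL
  refine ⟨L, le_refl _, fun i => a * wordPath v i, by simp [path_zero], ?_, ?_, ?_⟩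
  · show a * wordPath v L = b
    rw [← hlv, path_prod (le_refl _), hpv]; group
  · intro i hi
    show wordDist X (a * wordPath v i) (a * wordPath v (i + 1)) ≤ 1
    rw [dist_mul_left]
    exact path_step hv _
  · intro i hi
    have hfwd : wordDist X 1 (a * wordPath v i) ≤ c + i := by
      calc wordDist X 1 (a * wordPath v i)
          ≤ wordDist X 1 a + wordDist X a (a * wordPath v i) := dist_triangle hXsym hXgen _ _ _
        _ ≤ c + i := by
            refine Nat.add_le_add ha ?_
            have hml := dist_mul_left (X := X) a 1 (wordPath v i)
            rw [mul_one] at hml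
            rw [hml]
            calc wordDist X 1 (wordPath v i) ≤ min i v.length := dist_one_path hv _
              _ ≤ i := min_le_left _ _
    have hbwd : wordDist X 1 (a * wordPath v i) ≤ c + (L - i) := by
      have hdb : wordDist X (a * wordPath v i) b ≤ L - i := by
        have hdrop : IsWord X (v.drop i) := fun z hz => hv z (List.mem_of_mem_drop hz)
        have hprod : (v.drop i).prod = (a * wordPath v i)⁻¹ * b := by
          have : wordPath v i * (v.drop i).prod = v.prod := by
            rw [wordPath, ← List.prod_append, List.take_append_drop]
          rw [hpv] at this
          rw [mul_inv_rev]
          rw [mul_assoc]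
          rw [← this]
          group
        calc wordDist X (a * wordPath v i) b ≤ (v.drop i).length := dist_le hdrop hprod
          _ = v.length - i := List.length_drop
          _ ≤ L - i := by rw [hlv]
      calc wordDist X 1 (a * wordPath v i)
          ≤ wordDist X 1 b + wordDist X b (a * wordPath v i) := dist_triangle hXsym hXgen _ _ _
        _ = wordDist X 1 b + wordDist X (a * wordPath v i) b := by rw [dist_symm hXsym hXgen b]
        _ ≤ c + (L - i) := Nat.add_le_add hb hdb
    rcases le_or_gt i (L / 2) with h | h
    · exact le_trans hfwd (by omega)
    · have : L - i ≤ L / 2 := by omega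
      exact le_trans hbwd (by omega)

end FFTPAux


/-- The falsification by fellow traveler property with constant
`k ≥ 1` implies almost convexity(2) with constant at most `3k`. -/
theorem fftp_implies_almost_convex {G : Type*} [Group G]
    (X : Finset G) (hXsym : ∀ x ∈ X, x⁻¹ ∈ X)
    (hXgen : Subgroup.closure (X : Set G) = ⊤)
    (k : ℕ) (hk : 1 ≤ k) (hfftp : SyncFFTP X k) :
    ∀ (n : ℕ) (g g' : G), wordDist X 1 g = n → wordDist X 1 g' = n →
      wordDist X g g' ≤ 2 →
      ∃ (m : ℕ) (p : ℕ → G), m ≤ 3 * k ∧ p 0 = g ∧ p m = g' ∧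
        (∀ i < m, wordDist X (p i) (p (i + 1)) ≤ 1) ∧
        (∀ i ≤ m, wordDist X 1 (p i) ≤ n) := by
  intro n g g' hg hg' hgg'
  open FFTPAux in
  suffices h : FFTPAux.EP X n g g' (3 * k) by
    obtain ⟨m, hm, p, h0, hmm, hs, hb⟩ := h
    exact ⟨m, p, hm, h0, hmm, hs, hb⟩
  rcases Nat.eq_zero_or_pos (wordDist X g g') with h0 | hpos
  · have hgg : g = g' := FFTPAux.eq_of_dist_eq_zero hXsym hXgen h0
    subst hgg
    exact (FFTPAux.EP.refl (le_of_eq hg)).mono (by omega)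
  obtain ⟨v, hv, hlv, hpv⟩ := FFTPAux.exists_min_word hXsym hXgen g g'
  obtain ⟨w, hw, hlw, hpw⟩ := FFTPAux.exists_min_word hXsym hXgen 1 g
  have hpw' : w.prod = g := by simpa using hpw
  have hlw' : w.length = n := by rw [hlw, hg]
  set w₀ : List G := w ++ v with hw₀def
  have hw₀ : IsWord X w₀ := by
    intro z hz; rcases List.mem_append.1 hz with h | h
    exacts [hw z h, hv z h]
  have hp₀ : w₀.prod = g' := by
    rw [hw₀def, List.prod_append, hpw', hpv]; group
  have hlen₀ : w₀.length = n + v.length := by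
    rw [hw₀def, List.length_append, hlw']
  have hvpos : 1 ≤ v.length := by rw [hlv]; omega
  have hvle : v.length ≤ 2 := by rw [hlv]; exact hgg'
  have step : ∀ z : List G, IsWord X z → z.prod = g' → n < z.length →
      ∃ u, IsWord X u ∧ u.prod = g' ∧ u.length < z.length ∧ SyncFellowTravel X k u z := by
    intro z hz hpz hlz
    have hng : ¬ IsGeodesic X z := by
      rintro ⟨_, hgeo⟩
      rw [hpz, hg'] at hgeo; omega
    obtain ⟨u, h1, h2, h3, h4⟩ := hfftp z hz hng
    exact ⟨u, h1, by rw [h2, hpz], h3, h4⟩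
  obtain ⟨u₁, hu₁, hp₁, hl₁, hft₁⟩ := step w₀ hw₀ hp₀ (by omega)
  obtain ⟨u₂, hu₂, hp₂, hl₂, hft₂⟩ :
      ∃ u₂, IsWord X u₂ ∧ u₂.prod = g' ∧ u₂.length ≤ n ∧ SyncFellowTravel X k u₂ u₁ := by
    rcases le_or_gt u₁.length n with h | h
    · exact ⟨u₁, hu₁, hp₁, h, fun t => by rw [FFTPAux.dist_self]; omega⟩
    · obtain ⟨u₂, a1, a2, a3, a4⟩ := step u₁ hu₁ hp₁ h
      exact ⟨u₂, a1, a2, by omega, a4⟩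
  set s : ℕ := min (k / 2) n with hsdef
  have hsn : s ≤ n := min_le_right _ _
  have hsk : s ≤ k / 2 := min_le_left _ _
  have hw₀n : wordPath w₀ n = g := by
    unfold wordPath
    rw [hw₀def, ← hlw', List.take_left, hpw']
  have e1 : FFTPAux.EP X n g (wordPath w₀ (n - s)) s := by
    have h := FFTPAux.EP.descent hXsym hXgen hw₀ (t₁ := n - s) (t₂ := n) (by omega) (le_refl n)
    rw [hw₀n] at h
    have hns : n - (n - s) = s := by omega
    rw [hns] at h
    exact h
  have d1 : wordDist X (wordPath w₀ (n - s)) (wordPath u₁ (n - s)) ≤ k := by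
    rw [FFTPAux.dist_symm hXsym hXgen]; exact hft₁ (n - s)
  have d2 : wordDist X (wordPath u₁ (n - s)) (wordPath u₂ (n - s)) ≤ k := by
    rw [FFTPAux.dist_symm hXsym hXgen]; exact hft₂ (n - s)
  have bnd : ∀ (z : List G), IsWord X z → wordDist X 1 (wordPath z (n - s)) ≤ n - s :=
    fun z hz => le_trans (FFTPAux.dist_one_path hz _) (min_le_left _ _)
  have hcond : ∀ a b : G, wordDist X a b ≤ k →
      (n < k / 2 → a = 1 ∧ b = 1) → n - s + wordDist X a b / 2 ≤ n := by
    intro a b hab htriv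
    rcases le_or_gt (k / 2) n with h | h
    · have : wordDist X a b / 2 ≤ k / 2 := Nat.div_le_div_right hab
      have hs' : s = k / 2 := min_eq_left h
      omega
    · obtain ⟨ha, hb⟩ := htriv h
      subst ha; subst hb
      rw [FFTPAux.dist_self]
      omega
  have htriv : n < k / 2 → n - s = 0 := by intro h; omega
  have e2 : FFTPAux.EP X n (wordPath w₀ (n - s)) (wordPath u₁ (n - s)) k := by
    refine (FFTPAux.EP.cross hXsym hXgen (bnd _ hw₀) (bnd _ hu₁) ?_).mono d1
    refine hcond _ _ d1 ?_
    intro h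
    rw [htriv h, FFTPAux.path_zero, FFTPAux.path_zero]
    exact ⟨rfl, rfl⟩
  have e3 : FFTPAux.EP X n (wordPath u₁ (n - s)) (wordPath u₂ (n - s)) k := by
    refine (FFTPAux.EP.cross hXsym hXgen (bnd _ hu₁) (bnd _ hu₂) ?_).mono d2
    refine hcond _ _ d2 ?_
    intro h
    rw [htriv h, FFTPAux.path_zero, FFTPAux.path_zero]
    exact ⟨rfl, rfl⟩
  have e4 : FFTPAux.EP X n (wordPath u₂ (n - s)) g' s := by
    have h := FFTPAux.EP.ascent hXsym hXgen hu₂ (t := n - s) hl₂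
    rw [hp₂] at h
    exact h.mono (by omega)
  have := ((e1.trans e2).trans e3).trans e4
  exact this.mono (by omega)
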